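/- Let 2 ≤ B ≤ C. LME states exist for the tripartite dimensions (2, B, C) if and only if either B = C, or there exist positive integers N and k with N·k ≥ 2 such that B = N·k and C = (N+1)·k. -/

import Mathlib

open scoped ComplexConjugate

noncomputable section

def rho1 {A B C : ℕ} (ψ : Fin A × Fin B × Fin C → ℂ) : Matrix (Fin A) (Fin A) ℂ :=
  Matrix.of fun a a' => ∑ b, ∑ c, ψ (a, b, c) * conj (ψ (a', b, c))

def rho2 {A B C : ℕ} (ψ : Fin A × Fin B × Fin C → ℂ) : Matrix (Fin B) (Fin B) ℂ :=
  Matrix.of fun b b' => ∑ a, ∑ c, ψ (a, b, c) * conj (ψ (a, b', c))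

def rho3 {A B C : ℕ} (ψ : Fin A × Fin B × Fin C → ℂ) : Matrix (Fin C) (Fin C) ℂ :=
  Matrix.of fun c c' => ∑ a, ∑ b, ψ (a, b, c) * conj (ψ (a, b, c'))

def TriNormalized {A B C : ℕ} (ψ : Fin A × Fin B × Fin C → ℂ) : Prop :=
  ∑ x, ‖ψ x‖ ^ 2 = 1

def TriIsLME {A B C : ℕ} (ψ : Fin A × Fin B × Fin C → ℂ) : Prop :=
  TriNormalized ψ ∧ rho1 ψ = (1 / (A : ℂ)) • 1 ∧
    rho2 ψ = (1 / (B : ℂ)) • 1 ∧ rho3 ψ = (1 / (C : ℂ)) • 1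

def TriLMEExists (A B C : ℕ) : Prop := ∃ ψ : Fin A × Fin B × Fin C → ℂ, TriIsLME ψ

section ForwardMachinery
open Polynomial Matrix
open scoped ComplexOrder

lemma matrix_identities {B C : ℕ} (ψ : Fin 2 × Fin B × Fin C → ℂ) (hψ : TriIsLME ψ) :
    ∃ Xm Ym : Matrix (Fin B) (Fin C) ℂ,
      Xm * Xmᴴ + Ym * Ymᴴ = ((B:ℂ))⁻¹ • 1 ∧
      Xmᴴ * Xm + Ymᴴ * Ym = ((C:ℂ))⁻¹ • 1 := by
  obtain ⟨-, -, h2, h3⟩ := hψ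
  set Xm : Matrix (Fin B) (Fin C) ℂ := Matrix.of (fun b c => ψ (0, b, c)) with hXm
  set Ym : Matrix (Fin B) (Fin C) ℂ := Matrix.of (fun b c => ψ (1, b, c)) with hYm
  refine ⟨Xm, Ym, ?_, ?_⟩
  · ext b b'
    rw [← Matrix.ext_iff] at h2
    have hent := h2 b b'
    rw [rho2, Matrix.of_apply, Fin.sum_univ_two] at hent
    show (Xm * Xmᴴ + Ym * Ymᴴ) b b' = ((B:ℂ)⁻¹ • (1 : Matrix (Fin B) (Fin B) ℂ)) b b'
    have hRHS : ((B:ℂ)⁻¹ • (1 : Matrix (Fin B) (Fin B) ℂ)) b b'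
        = ((1/(B:ℂ)) • (1 : Matrix (Fin B) (Fin B) ℂ)) b b' := by rw [one_div]
    rw [hRHS, ← hent]
    simp only [Matrix.add_apply, Matrix.mul_apply, Matrix.conjTranspose_apply, hXm, hYm,
      Matrix.of_apply, RCLike.star_def]
  · ext c c'
    rw [← Matrix.ext_iff] at h3
    have hent := h3 c' c
    rw [rho3, Matrix.of_apply, Fin.sum_univ_two] at hent
    have h1cc : ((1 : Matrix (Fin C) (Fin C) ℂ)) c' c = (1 : Matrix (Fin C) (Fin C) ℂ) c c' := by
      simp [Matrix.one_apply, eq_comm]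
    show (Xmᴴ * Xm + Ymᴴ * Ym) c c' = ((C:ℂ)⁻¹ • (1 : Matrix (Fin C) (Fin C) ℂ)) c c'
    have hRHS : ((C:ℂ)⁻¹ • (1 : Matrix (Fin C) (Fin C) ℂ)) c c'
        = ((1/(C:ℂ)) • (1 : Matrix (Fin C) (Fin C) ℂ)) c' c := by
      rw [one_div, Matrix.smul_apply, Matrix.smul_apply, h1cc]
    rw [hRHS, ← hent]
    simp only [Matrix.add_apply, Matrix.mul_apply, Matrix.conjTranspose_apply, hXm, hYm,
      Matrix.of_apply, RCLike.star_def]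
    congr 1 <;> (apply Finset.sum_congr rfl; intro b _; ring)


lemma eval_charpoly {n : ℕ} (M : Matrix (Fin n) (Fin n) ℂ) (t : ℂ) :
    (M.charpoly).eval t = (t • (1 : Matrix (Fin n) (Fin n) ℂ) - M).det := by
  rw [Matrix.charpoly, ← Polynomial.coe_evalRingHom, RingHom.map_det]
  congr 1
  ext i j
  by_cases h : i = j <;>
    simp [h, charmatrix_apply, Matrix.one_apply, Matrix.smul_apply, Matrix.map_apply]

lemma charpoly_rect {B C : ℕ} (hBC : B ≤ C) (M : Matrix (Fin B) (Fin C) ℂ) :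
    (M * Mᴴ).charpoly * X ^ (C - B) = (Mᴴ * M).charpoly := by
  have key : ∀ t : ℂ, t ≠ 0 →
      ((M * Mᴴ).charpoly * X ^ (C - B)).eval t = (Mᴴ * M).charpoly.eval t := by
    intro t ht
    rw [eval_mul, eval_pow, eval_X, eval_charpoly, eval_charpoly]
    have e1 : t • (1 : Matrix (Fin B) (Fin B) ℂ) - M * Mᴴ = t • (1 - M * (t⁻¹ • Mᴴ)) := by
      rw [smul_sub]; congr 1; rw [Matrix.mul_smul, smul_smul, mul_inv_cancel₀ ht, one_smul]
    have e2 : t • (1 : Matrix (Fin C) (Fin C) ℂ) - Mᴴ * M = t • (1 - (t⁻¹ • Mᴴ) * M) := by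
      rw [smul_sub]; congr 1; rw [Matrix.smul_mul, smul_smul, mul_inv_cancel₀ ht, one_smul]
    rw [e1, e2, Matrix.det_smul, Matrix.det_smul, Matrix.det_one_sub_mul_comm,
      Fintype.card_fin, Fintype.card_fin]
    rw [mul_right_comm, ← pow_add]
    have : B + (C - B) = C := by omega
    rw [this]
  have h0 : (M * Mᴴ).charpoly * X ^ (C - B) - (Mᴴ * M).charpoly = 0 := by
    apply Polynomial.eq_zero_of_infinite_isRoot
    apply Set.Infinite.mono (s := {(0:ℂ)}ᶜ)
    · intro t ht
      simp only [Set.mem_compl_iff, Set.mem_singleton_iff] at ht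
      simp only [Set.mem_setOf_eq, IsRoot, eval_sub, sub_eq_zero]
      exact key t ht
    · exact Set.Finite.infinite_compl (Set.finite_singleton _)
  have := sub_eq_zero.mp h0
  exact this

lemma roots_charpoly_card {n : ℕ} (M : Matrix (Fin n) (Fin n) ℂ) :
    M.charpoly.roots.card = n := by
  rw [(Polynomial.splits_iff_card_roots).1 (IsAlgClosed.splits M.charpoly),
    Matrix.charpoly_natDegree_eq_dim, Fintype.card_fin]

lemma roots_charpoly_smul_one_sub {n : ℕ} (c : ℂ) (M : Matrix (Fin n) (Fin n) ℂ) :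
    (c • (1 : Matrix (Fin n) (Fin n) ℂ) - M).charpoly.roots
      = M.charpoly.roots.map (fun r => c - r) := by
  have hM : M.charpoly = (M.charpoly.roots.map fun a => X - C a).prod :=
    (IsAlgClosed.splits _).eq_prod_roots_of_monic (Matrix.charpoly_monic M)
  have hcard := roots_charpoly_card M
  set R := M.charpoly.roots with hR
  have key : (c • (1 : Matrix (Fin n) (Fin n) ℂ) - M).charpoly
      = ((R.map (fun r => c - r)).map fun a => X - C a).prod := by
    apply Polynomial.funext
    intro t
    have lhs : eval t (c • (1 : Matrix (Fin n) (Fin n) ℂ) - M).charpoly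
        = (-1) ^ n * eval (c - t) M.charpoly := by
      rw [_root_.eval_charpoly, _root_.eval_charpoly]
      have e1 : t • (1 : Matrix (Fin n) (Fin n) ℂ) - (c • 1 - M)
          = -((c - t) • 1 - M) := by
        rw [neg_sub, sub_smul]; abel
      rw [e1, Matrix.det_neg, Fintype.card_fin]
    have hev : ∀ s : ℂ, eval s M.charpoly = (R.map (fun r => s - r)).prod := by
      intro s
      conv_lhs => rw [hM]
      rw [Polynomial.eval_multiset_prod, Multiset.map_map]
      refine congrArg _ (Multiset.map_congr rfl fun r _ => ?_)
      simp
    have rhs : eval t ((R.map (fun r => c - r)).map fun a => X - C a).prod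
        = (-1) ^ n * (R.map (fun r => (c - t) - r)).prod := by
      rw [Polynomial.eval_multiset_prod, Multiset.map_map, Multiset.map_map]
      have heq : ((eval t ∘ fun a => X - C a) ∘ fun r => c - r)
          = (fun x => -x) ∘ (fun r => (c - t) - r) := by
        funext r; simp only [Function.comp_apply, eval_sub, eval_X, eval_C]; ring
      rw [heq, ← Multiset.map_map, Multiset.prod_map_neg, Multiset.card_map, hcard]
    rw [lhs, rhs, hev]
  rw [key, roots_multiset_prod_X_sub_C]
lemma psd_root_nonneg_real {n : ℕ} {M : Matrix (Fin n) (Fin n) ℂ} (hM : M.PosSemidef)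
    {z : ℂ} (hz : z ∈ M.charpoly.roots) : ∃ r : ℝ, 0 ≤ r ∧ z = (r : ℂ) := by
  have hroot : M.charpoly.IsRoot z := (Polynomial.mem_roots'.1 hz).2
  have hdet : (z • (1 : Matrix (Fin n) (Fin n) ℂ) - M).det = 0 := by
    rw [← eval_charpoly]; exact hroot
  obtain ⟨v, hv, hveq⟩ := (Matrix.exists_mulVec_eq_zero_iff).2 hdet
  have hMv : M *ᵥ v = z • v := by
    have := hveq
    rw [Matrix.sub_mulVec, Matrix.smul_mulVec, Matrix.one_mulVec, sub_eq_zero] at this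
    exact this.symm
  set S : ℝ := ∑ i, Complex.normSq (v i) with hS
  have hSpos : 0 < S := by
    rcases Function.ne_iff.1 hv with ⟨i, hi⟩
    have hpos : 0 < Complex.normSq (v i) := Complex.normSq_pos.mpr hi
    exact lt_of_lt_of_le hpos (Finset.single_le_sum (f := fun i => Complex.normSq (v i))
      (fun j _ => Complex.normSq_nonneg _) (Finset.mem_univ i))
  have hdot : dotProduct (star v) (M *ᵥ v) = z * (S : ℂ) := by
    rw [hMv, dotProduct_smul]
    congr 1
    simp only [dotProduct, Pi.star_apply, hS]
    push_cast
    congr 1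
    funext i
    rw [mul_comm, Complex.star_def, Complex.mul_conj]
  have h0 := hM.dotProduct_mulVec_nonneg v
  rw [hdot, Complex.le_def] at h0
  simp only [Complex.zero_re, Complex.zero_im, Complex.mul_re, Complex.mul_im,
    Complex.ofReal_re, Complex.ofReal_im, mul_zero, zero_mul, sub_zero, add_zero,
    zero_add] at h0
  have him : z.im = 0 := by
    have h2 : z.im * S = 0 := by linarith [h0.2]
    rcases mul_eq_zero.1 h2 with h | h
    · exact h
    · exact absurd h (ne_of_gt hSpos)
  refine ⟨z.re, ?_, ?_⟩
  · nlinarith [h0.1]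
  · exact Complex.ext rfl (by simp [him])


lemma forward_core (B C : ℕ) (hB : 2 ≤ B) (hlt : B < C)
    (E1 E2 : Multiset ℂ)
    (hc2 : Multiset.card E2 = C)
    (hF1 : E2 = E1 + Multiset.replicate (C - B) 0)
    (hF2 : E2.map (fun z => ((C:ℂ))⁻¹ - z)
         = E1.map (fun z => ((B:ℂ))⁻¹ - z) + Multiset.replicate (C - B) 0)
    (hpos : ∀ z ∈ E2, ∃ r : ℝ, 0 ≤ r ∧ z = (r:ℂ))
    (hup : ∀ z ∈ E2.map (fun z => ((C:ℂ))⁻¹ - z), ∃ r : ℝ, 0 ≤ r ∧ z = (r:ℂ)) :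
    ∃ N k : ℕ, 1 ≤ N ∧ 1 ≤ k ∧ 2 ≤ N * k ∧ B = N * k ∧ C = (N + 1) * k := by
  classical
  set e : ℕ := C - B with he
  have he1 : 1 ≤ e := by omega
  set b0 : ℝ := (B:ℝ)⁻¹ with hb0def
  set c0 : ℝ := (C:ℝ)⁻¹ with hc0def
  have hBpos : (0:ℝ) < B := by exact_mod_cast (by omega : 0 < B)
  have hCpos : (0:ℝ) < C := by exact_mod_cast (by omega : 0 < C)
  have hb0pos : 0 < b0 := by rw [hb0def]; positivity
  have hc0pos : 0 < c0 := by rw [hc0def]; positivity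
  set d0 : ℝ := b0 - c0 with hd0def
  have hd0 : 0 < d0 := by
    rw [hd0def, sub_pos, hb0def, hc0def]
    apply inv_strictAnti₀ hBpos
    exact_mod_cast hlt
  set bb : ℂ := ((B:ℂ))⁻¹ with hbbdef
  set cc : ℂ := ((C:ℂ))⁻¹ with hccdef
  have hbbcast : bb = ((b0:ℝ):ℂ) := by rw [hbbdef, hb0def]; push_cast; ring
  have hcccast : cc = ((c0:ℝ):ℂ) := by rw [hccdef, hc0def]; push_cast; ring
  set δ : ℂ := bb - cc with hδdef
  have hδcast : δ = ((d0:ℝ):ℂ) := by rw [hδdef, hbbcast, hcccast, hd0def]; push_cast; ring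
  set m : ℂ → ℕ := fun z => E2.count z with hm
  have inj2 : Function.Injective (fun z : ℂ => cc - z) := fun x y h => by
    simpa using sub_right_injective h
  have inj1 : Function.Injective (fun z : ℂ => bb - z) := fun x y h => by
    simpa using sub_right_injective h
  have key1 : ∀ lam : ℂ, m lam = Multiset.count lam E1 + (if lam = 0 then e else 0) := by
    intro lam
    have h1 := congrArg (Multiset.count lam) hF1
    rw [Multiset.count_add, Multiset.count_replicate] at h1
    simpa [eq_comm] using h1
  have key2 : ∀ u : ℂ, m (cc - u) = Multiset.count (bb - u) E1 + (if u = 0 then e else 0) := by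
    intro u
    have h2 := congrArg (Multiset.count u) hF2
    rw [Multiset.count_add, Multiset.count_replicate] at h2
    have e2l : Multiset.count u (E2.map (fun z => cc - z)) = m (cc - u) := by
      have h := Multiset.count_map_eq_count' (fun z : ℂ => cc - z) E2 inj2 (cc - u)
      simpa using h
    have e2r : Multiset.count u (E1.map (fun z => bb - z)) = Multiset.count (bb - u) E1 := by
      have h := Multiset.count_map_eq_count' (fun z : ℂ => bb - z) E1 inj1 (bb - u)
      simpa using h
    rw [e2l, e2r] at h2
    simpa [eq_comm] using h2
  have R : ∀ lam : ℂ, m (lam - δ) + (if lam = 0 then e else 0)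
      = m lam + (if lam = bb then e else 0) := by
    intro lam
    have h1 := key2 (bb - lam)
    have hrw : cc - (bb - lam) = lam - δ := by rw [hδdef]; ring
    have hrw2 : bb - (bb - lam) = lam := by ring
    rw [hrw, hrw2] at h1
    have hcond : (bb - lam = 0) ↔ (lam = bb) := by rw [sub_eq_zero, eq_comm]
    rw [if_congr hcond rfl rfl] at h1
    have h2 := key1 lam
    omega
  -- support bounds
  have hbbne0 : bb ≠ 0 := by
    rw [hbbcast]; exact_mod_cast ne_of_gt hb0pos
  have supp : ∀ z : ℂ, m z ≠ 0 → ∃ r : ℝ, 0 ≤ r ∧ r ≤ c0 ∧ z = (r:ℂ) := by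
    intro z hz
    have hzmem : z ∈ E2 := by
      by_contra hmem
      exact hz (Multiset.count_eq_zero.2 hmem)
    obtain ⟨r, hr0, hrz⟩ := hpos z hzmem
    obtain ⟨r', hr'0, hrz'⟩ := hup (cc - z) (Multiset.mem_map_of_mem _ hzmem)
    refine ⟨r, hr0, ?_, hrz⟩
    rw [hrz, hcccast] at hrz'
    have : c0 - r = r' := by exact_mod_cast hrz'
    linarith
  have m0 : m 0 = e := by
    have h := R 0
    rw [if_pos rfl, if_neg (by exact (Ne.symm hbbne0))] at h
    have hmδ : m (0 - δ) = 0 := by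
      by_contra hne
      obtain ⟨r, hr0, _, hrz⟩ := supp _ hne
      rw [hδcast] at hrz
      have : (0:ℝ) - d0 = r := by exact_mod_cast hrz
      linarith
    omega
  have Rstep : ∀ lam : ℂ, lam ≠ 0 → lam ≠ bb → m (lam - δ) = m lam := by
    intro lam h1 h2
    have h := R lam
    rw [if_neg h1, if_neg h2] at h
    omega
  -- chain values
  set ν : ℕ → ℂ := fun j => (((j:ℝ) * d0 : ℝ) : ℂ) with hν
  have hνval : ∀ j : ℕ, ν j = (((j:ℝ) * d0 : ℝ) : ℂ) := fun j => rfl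
  have hνsub : ∀ j : ℕ, ν (j+1) - δ = ν j := by
    intro j; rw [hν, hδcast]; push_cast; ring
  have hν0 : ν 0 = 0 := by rw [hνval]; push_cast; ring
  have hνne0 : ∀ j : ℕ, ν (j+1) ≠ 0 := by
    intro j h
    rw [hνval] at h
    have : ((j:ℝ)+1) * d0 = 0 := by exact_mod_cast h
    nlinarith [hd0]
  have hb0c0 : b0 = c0 + d0 := by rw [hd0def]; ring
  -- existence of N with N * d0 = c0
  have hNex : ∃ N : ℕ, (N:ℝ) * d0 = c0 := by
    by_contra hno
    push_neg at hno
    have ind : ∀ j : ℕ, m (ν j) = e := by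
      intro j
      induction j with
      | zero => rw [hν0]; exact m0
      | succ j ih =>
        have h2 : ν (j+1) ≠ bb := by
          intro h
          rw [hνval, hbbcast] at h
          have : ((j:ℝ)+1) * d0 = b0 := by exact_mod_cast h
          exact hno j (by linarith [hb0c0, this])
        have := Rstep (ν (j+1)) (hνne0 j) h2
        rw [hνsub j] at this
        omega
    obtain ⟨j, hj⟩ := exists_nat_gt (c0 / d0)
    have hjd : c0 < (j:ℝ) * d0 := by
      rw [div_lt_iff₀ hd0] at hj; linarith
    have hme : m (ν j) ≠ 0 := by rw [ind j]; omega
    obtain ⟨r, _, hrc, hrz⟩ := supp _ hme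
    rw [hνval] at hrz
    have : (j:ℝ) * d0 = r := by exact_mod_cast hrz
    linarith
  obtain ⟨N, hN⟩ := hNex
  have hN1 : 1 ≤ N := by
    by_contra h
    push_neg at h
    interval_cases N
    simp at hN
    linarith
  -- multiplicities along the chain
  have claimB : ∀ j : ℕ, j ≤ N → m (ν j) = e := by
    intro j
    induction j with
    | zero => intro _; rw [hν0]; exact m0
    | succ j ih =>
      intro hjN
      have h2 : ν (j+1) ≠ bb := by
        intro h
        rw [hνval, hbbcast] at h
        have h3 : ((j:ℝ)+1) * d0 = b0 := by exact_mod_cast h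
        have h4 : ((j:ℝ)+1) * d0 = ((N:ℝ)+1) * d0 := by
          rw [h3, hb0c0, ← hN]; ring
        have h5 : (j:ℝ) + 1 = (N:ℝ) + 1 := mul_right_cancel₀ (ne_of_gt hd0) h4
        have : j = N := by exact_mod_cast (by linarith : (j:ℝ) = (N:ℝ))
        omega
      have h := Rstep (ν (j+1)) (hνne0 j) h2
      rw [hνsub j] at h
      rw [← h]
      exact ih (by omega)
  -- all support elements lie on the chain
  have aux : ∀ n : ℕ, ∀ r : ℝ, 0 ≤ r → r ≤ (n:ℝ) * d0 → m ((r:ℝ):ℂ) ≠ 0 →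
      ∃ j : ℕ, (r:ℝ) = (j:ℝ) * d0 := by
    intro n
    induction n with
    | zero =>
      intro r hr0 hrn _
      refine ⟨0, ?_⟩
      push_cast at hrn ⊢
      linarith
    | succ n ih =>
      intro r hr0 hrn hme
      by_cases hr : r = 0
      · exact ⟨0, by rw [hr]; push_cast; ring⟩
      · have h1 : ((r:ℝ):ℂ) ≠ 0 := by exact_mod_cast hr
        obtain ⟨r', _, hr'c, hr'z⟩ := supp _ hme
        have hrr' : r = r' := by exact_mod_cast hr'z
        have h2 : ((r:ℝ):ℂ) ≠ bb := by
          rw [hbbcast]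
          intro h
          have : r = b0 := by exact_mod_cast h
          rw [hb0c0] at this
          have : r ≤ c0 := hrr' ▸ hr'c
          linarith [hrr' ▸ hr'c, hd0, hc0pos]
        have h := Rstep _ h1 h2
        have hrsub : ((r:ℝ):ℂ) - δ = (((r - d0 : ℝ)):ℂ) := by
          rw [hδcast]; push_cast; ring
        rw [hrsub] at h
        have hme' : m (((r - d0 : ℝ)):ℂ) ≠ 0 := by rw [h]; exact hme
        obtain ⟨r'', hr''0, _, hr''z⟩ := supp _ hme'
        have hrd0 : r - d0 = r'' := by exact_mod_cast hr''z
        have hge : 0 ≤ r - d0 := by rw [hrd0]; exact hr''0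
        have hle : r - d0 ≤ (n:ℝ) * d0 := by push_cast at hrn; linarith
        obtain ⟨j, hj⟩ := ih (r - d0) hge hle hme'
        exact ⟨j + 1, by push_cast; linarith⟩
  -- counting
  set Fset : Finset ℂ := (Finset.range (N+1)).image ν with hFset
  have νinj : ∀ i j : ℕ, ν i = ν j → i = j := by
    intro i j h
    rw [hνval, hνval] at h
    have h2 : (i:ℝ) * d0 = (j:ℝ) * d0 := by exact_mod_cast h
    have := mul_right_cancel₀ (ne_of_gt hd0) h2
    exact_mod_cast this
  have hsub : E2.toFinset ⊆ Fset := by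
    intro z hz
    have hzmem : z ∈ E2 := Multiset.mem_toFinset.1 hz
    have hmz : m z ≠ 0 := by
      rw [hm]
      simpa using (Multiset.count_pos.2 hzmem).ne'
    obtain ⟨r, hr0, hrc, hrz⟩ := supp z hmz
    have hrN : r ≤ (N:ℝ) * d0 := by rw [hN]; exact hrc
    obtain ⟨j, hj⟩ := aux N r hr0 hrN (by rwa [← hrz])
    have hjN : j ≤ N := by
      have : (j:ℝ) * d0 ≤ (N:ℝ) * d0 := by rw [← hj, hN]; exact hrc
      have := le_of_mul_le_mul_right this hd0
      exact_mod_cast this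
    apply Finset.mem_image.2
    refine ⟨j, Finset.mem_range.2 (by omega), ?_⟩
    rw [hνval, ← hj]
    exact hrz.symm
  have hsum1 : (C:ℕ) = ∑ z ∈ E2.toFinset, m z := by
    rw [hm, ← hc2, Multiset.toFinset_sum_count_eq]
  have hsum2 : ∑ z ∈ E2.toFinset, m z = ∑ z ∈ Fset, m z := by
    apply Finset.sum_subset hsub
    intro z _ hz
    rw [hm]
    exact Multiset.count_eq_zero.2 (fun hmem => hz (Multiset.mem_toFinset.2 hmem))
  have hsum3 : ∑ z ∈ Fset, m z = ∑ j ∈ Finset.range (N+1), m (ν j) := by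
    rw [hFset]
    rw [Finset.sum_image]
    intro i _ j _ h
    exact νinj i j h
  have hsum4 : ∑ j ∈ Finset.range (N+1), m (ν j) = (N+1) * e := by
    rw [Finset.sum_congr rfl (fun j hj => claimB j (by
      have := Finset.mem_range.1 hj; omega))]
    rw [Finset.sum_const, Finset.card_range, smul_eq_mul]
  have hCeq : C = (N+1) * e := by rw [hsum1, hsum2, hsum3, hsum4]
  have hexp : (N+1) * e = N * e + e := by ring
  have h5 : B + e = C := by omega
  refine ⟨N, e, hN1, he1, ?_, ?_, ?_⟩ <;> omega


lemma forward_dir (B C : ℕ) (hB : 2 ≤ B) (hlt : B < C) (h : TriLMEExists 2 B C) :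
    ∃ N k : ℕ, 1 ≤ N ∧ 1 ≤ k ∧ 2 ≤ N * k ∧ B = N * k ∧ C = (N + 1) * k := by
  obtain ⟨ψ, hψ⟩ := h
  obtain ⟨Xm, Ym, hXY2, hXY3⟩ := matrix_identities ψ hψ
  have hBC : B ≤ C := le_of_lt hlt
  have hYY2 : Ym * Ymᴴ = ((B:ℂ))⁻¹ • (1 : Matrix (Fin B) (Fin B) ℂ) - Xm * Xmᴴ :=
    eq_sub_of_add_eq' hXY2
  have hYY3 : Ymᴴ * Ym = ((C:ℂ))⁻¹ • (1 : Matrix (Fin C) (Fin C) ℂ) - Xmᴴ * Xm :=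
    eq_sub_of_add_eq' hXY3
  set E1 : Multiset ℂ := (Xm * Xmᴴ).charpoly.roots with hE1
  set E2 : Multiset ℂ := (Xmᴴ * Xm).charpoly.roots with hE2
  have hXpow : (X ^ (C - B) : Polynomial ℂ).roots = Multiset.replicate (C - B) 0 := by
    simp [roots_pow, Multiset.nsmul_singleton]
  have hF1 : E2 = E1 + Multiset.replicate (C - B) 0 := by
    rw [hE2, hE1, ← charpoly_rect hBC Xm,
      Polynomial.roots_mul (mul_ne_zero (Matrix.charpoly_monic _).ne_zero
        (pow_ne_zero _ Polynomial.X_ne_zero)), hXpow]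
  have hEY1 : (Ym * Ymᴴ).charpoly.roots = E1.map (fun z => ((B:ℂ))⁻¹ - z) := by
    rw [hYY2, roots_charpoly_smul_one_sub]
  have hEY2 : (Ymᴴ * Ym).charpoly.roots = E2.map (fun z => ((C:ℂ))⁻¹ - z) := by
    rw [hYY3, roots_charpoly_smul_one_sub]
  have hF2 : E2.map (fun z => ((C:ℂ))⁻¹ - z)
      = E1.map (fun z => ((B:ℂ))⁻¹ - z) + Multiset.replicate (C - B) 0 := by
    rw [← hEY2, ← hEY1, ← charpoly_rect hBC Ym,
      Polynomial.roots_mul (mul_ne_zero (Matrix.charpoly_monic _).ne_zero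
        (pow_ne_zero _ Polynomial.X_ne_zero)), hXpow]
  apply forward_core B C hB hlt E1 E2 (roots_charpoly_card _) hF1 hF2
  · intro z hz
    exact psd_root_nonneg_real (Matrix.posSemidef_conjTranspose_mul_self Xm) hz
  · intro z hz
    rw [← hEY2] at hz
    exact psd_root_nonneg_real (Matrix.posSemidef_conjTranspose_mul_self Ym) hz

end ForwardMachinery

section Constructions

section IndicatorMachinery

lemma ite_mul_conj (P Q : Prop) [Decidable P] [Decidable Q] (x y : ℝ) :
    (if P then ((x:ℝ):ℂ) else 0) * conj (if Q then ((y:ℝ):ℂ) else 0)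
      = if P ∧ Q then (((x*y : ℝ)):ℂ) else 0 := by
  rcases em P with hP | hP <;> rcases em Q with hQ | hQ <;>
    simp [hP, hQ, Complex.conj_ofReal]

lemma sum_ite_eq_pair {α : Type*} [Fintype α] [DecidableEq α] (x y : α) (v : ℂ) :
    (∑ c : α, if c = x ∧ c = y then v else 0) = if x = y then v else 0 := by
  rcases eq_or_ne x y with h | h
  · subst h
    have hc : ∀ c : α, (if c = x ∧ c = x then v else 0) = if c = x then v else 0 :=
      fun c => by simp
    rw [if_pos rfl, Finset.sum_congr rfl (fun c _ => hc c)]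
    simp
  · rw [if_neg h]
    apply Finset.sum_eq_zero
    intro c _
    rw [if_neg]
    rintro ⟨rfl, rfl⟩
    exact h rfl

variable {B C : ℕ} (u : Fin 2 → Fin B → Fin C) (w : Fin 2 → Fin B → ℝ)

def ψind : Fin 2 × Fin B × Fin C → ℂ :=
  fun x => if x.2.2 = u x.1 x.2.1 then ((w x.1 x.2.1 : ℝ):ℂ) else 0

lemma rho1_ind (a a' : Fin 2) : rho1 (ψind u w) a a'
    = ∑ b, if u a b = u a' b then (((w a b * w a' b : ℝ)):ℂ) else 0 := by
  rw [rho1, Matrix.of_apply]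
  simp only [ψind]
  apply Finset.sum_congr rfl
  intro b _
  rw [Finset.sum_congr rfl (fun c _ => ite_mul_conj (c = u a b) (c = u a' b) (w a b) (w a' b))]
  exact sum_ite_eq_pair _ _ _

lemma rho2_ind (b b' : Fin B) : rho2 (ψind u w) b b'
    = ∑ a, if u a b = u a b' then (((w a b * w a b' : ℝ)):ℂ) else 0 := by
  rw [rho2, Matrix.of_apply]
  simp only [ψind]
  apply Finset.sum_congr rfl
  intro a _
  rw [Finset.sum_congr rfl (fun c _ => ite_mul_conj (c = u a b) (c = u a b') (w a b) (w a b'))]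
  exact sum_ite_eq_pair _ _ _

lemma rho3_ind (c c' : Fin C) : rho3 (ψind u w) c c'
    = ∑ a, ∑ b, if c = u a b ∧ c' = u a b then ((((w a b)^2 : ℝ)):ℂ) else 0 := by
  rw [rho3, Matrix.of_apply]
  simp only [ψind]
  apply Finset.sum_congr rfl
  intro a _
  apply Finset.sum_congr rfl
  intro b _
  rw [ite_mul_conj (c = u a b) (c' = u a b) (w a b) (w a b), ← sq]

lemma norm_ind : (∑ x, ‖ψind u w x‖ ^ 2) = ∑ a, ∑ b, (w a b)^2 := by
  rw [Fintype.sum_prod_type]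
  apply Finset.sum_congr rfl
  intro a _
  rw [Fintype.sum_prod_type]
  apply Finset.sum_congr rfl
  intro b _
  have : ∀ c : Fin C, ‖ψind u w (a, b, c)‖^2 = if c = u a b then (w a b)^2 else 0 := by
    intro c
    rw [ψind]
    rcases em (c = u a b) with h | h <;> simp [h, sq_abs]
  rw [Finset.sum_congr rfl (fun c _ => this c)]
  simpa using Finset.sum_ite_eq' Finset.univ (u a b) (fun _ => (w a b)^2)

end IndicatorMachinery

section ShiftConstruction

lemma exists_BB (B : ℕ) (hB : 2 ≤ B) : TriLMEExists 2 B B := by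
  haveI : NeZero B := ⟨by omega⟩
  set g : Fin 2 → Fin B ≃ Fin B := fun a => if a = 0 then Equiv.refl _ else Equiv.addRight 1
    with hg
  set r : ℝ := (Real.sqrt (2 * B))⁻¹ with hr
  have hBpos : (0:ℝ) < B := by exact_mod_cast (by omega : 0 < B)
  have hB0 : ((B:ℂ)) ≠ 0 := by exact_mod_cast (by omega : B ≠ 0)
  have hr2 : r^2 = (2 * (B:ℝ))⁻¹ := by
    rw [hr, sq, ← mul_inv, Real.mul_self_sqrt (by positivity)]
  have hrr : ((r * r : ℝ) : ℂ) = (2 * (B:ℂ))⁻¹ := by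
    rw [show r * r = r^2 from (sq r).symm, hr2]
    push_cast
    ring
  have hone : (1 : Fin B) ≠ 0 := by
    have h2 := Fin.one_eq_zero_iff (n := B)
    intro h
    rw [h2] at h
    omega
  have e1 : ∀ b : Fin B, (g 1) b = b + 1 := by
    intro b
    show (if (1 : Fin 2) = 0 then Equiv.refl (Fin B) else Equiv.addRight 1) b = b + 1
    rw [if_neg (by decide : ¬(1:Fin 2) = 0)]
    rfl
  have e0 : ∀ b : Fin B, (g 0) b = b := by
    intro b
    show (if (0 : Fin 2) = 0 then Equiv.refl (Fin B) else Equiv.addRight 1) b = b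
    rw [if_pos rfl]
    rfl
  have hgne : ∀ b : Fin B, (g 1) b ≠ (g 0) b := by
    intro b
    rw [e1, e0]
    intro h
    apply hone
    have h2 : b + 1 = b + 0 := by rw [add_zero]; exact h
    exact add_left_cancel h2
  have hfin2 : ∀ i : Fin 2, i = 0 ∨ i = 1 := by decide
  refine ⟨ψind (fun a b => g a b) (fun _ _ => r), ?_, ?_, ?_, ?_⟩
  · rw [TriNormalized, norm_ind]
    simp only [Finset.sum_const, Finset.card_univ, Fintype.card_fin, smul_eq_mul, nsmul_eq_mul]
    rw [hr2]
    push_cast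
    field_simp
  · ext a a'
    rw [rho1_ind]
    rcases eq_or_ne a a' with h | h
    · subst h
      simp only [if_pos rfl]
      rw [Finset.sum_const, Finset.card_univ, Fintype.card_fin, nsmul_eq_mul, hrr]
      have hRHS : ((1 / ((2:ℕ):ℂ)) • (1 : Matrix (Fin 2) (Fin 2) ℂ)) a a = 1 / 2 := by
        simp [Matrix.one_apply]
      rw [hRHS]
      field_simp
      all_goals (simp only [↓reduceIte]; field_simp)
    · have hz : ∀ b : Fin B, (g a) b ≠ (g a') b := by
        intro b
        rcases hfin2 a with rfl | rfl <;> rcases hfin2 a' with rfl | rfl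
        · exact absurd rfl h
        · exact fun hh => hgne b hh.symm
        · exact hgne b
        · exact absurd rfl h
      rw [Finset.sum_congr rfl (fun b _ => if_neg (hz b))]
      simp [Matrix.one_apply, h]
  · ext b b'
    rw [rho2_ind]
    rcases eq_or_ne b b' with h | h
    · subst h
      simp only [if_pos rfl]
      rw [Finset.sum_const, Finset.card_univ, Fintype.card_fin, nsmul_eq_mul, hrr]
      have hRHS : ((1 / ((B:ℕ):ℂ)) • (1 : Matrix (Fin B) (Fin B) ℂ)) b b = 1 / B := by
        simp [Matrix.one_apply]
      rw [hRHS]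
      field_simp
      all_goals (simp only [↓reduceIte]; field_simp; norm_num)
    · have hz : ∀ a : Fin 2, (g a) b ≠ (g a) b' := by
        intro a hh
        exact h ((g a).injective hh)
      rw [Finset.sum_congr rfl (fun a _ => if_neg (hz a))]
      simp [Matrix.one_apply, h]
  · ext c c'
    rw [rho3_ind]
    have hinner : ∀ a : Fin 2, (∑ b, if c = (g a) b ∧ c' = (g a) b
        then ((((r:ℝ)^2 : ℝ)):ℂ) else 0) = if c = c' then ((r^2:ℝ):ℂ) else 0 := by
      intro a
      have hcond : ∀ b : Fin B, (c = (g a) b ∧ c' = (g a) b)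
          = (b = (g a).symm c ∧ b = (g a).symm c') := by
        intro b
        have h1 : (c = (g a) b) = (b = (g a).symm c) := by
          apply propext
          rw [eq_comm, Equiv.apply_eq_iff_eq_symm_apply (g a), eq_comm]
        have h2 : (c' = (g a) b) = (b = (g a).symm c') := by
          apply propext
          rw [eq_comm, Equiv.apply_eq_iff_eq_symm_apply (g a), eq_comm]
        rw [h1, h2]
      simp only [hcond]
      rw [sum_ite_eq_pair]
      have heq : ((g a).symm c = (g a).symm c') = (c = c') := by
        apply propext
        exact ⟨fun hh => (g a).symm.injective hh, fun hh => by rw [hh]⟩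
      simp only [heq]
    rw [Finset.sum_congr rfl (fun a _ => hinner a)]
    rcases eq_or_ne c c' with h | h
    · subst h
      simp only [if_pos rfl]
      rw [Finset.sum_const, Finset.card_univ, Fintype.card_fin, nsmul_eq_mul]
      have hRHS : ((1 / ((B:ℕ):ℂ)) • (1 : Matrix (Fin B) (Fin B) ℂ)) c c = 1 / B := by
        simp [Matrix.one_apply]
      rw [hRHS, hr2]
      push_cast
      field_simp
    · rw [Finset.sum_congr rfl (fun a _ => if_neg h)]
      simp [Matrix.one_apply, h]

end ShiftConstruction
section Helpers

lemma fin_sum_ite_val {N : ℕ} (i : ℕ) (f : ℕ → ℂ) :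
    (∑ b : Fin N, if i = b.val then f b.val else 0) = if i < N then f i else 0 := by
  rw [Fin.sum_univ_eq_sum_range (fun j => if i = j then f j else 0)]
  rw [Finset.sum_ite_eq (Finset.range N) i f]
  simp [Finset.mem_range]

lemma fin_sum_ite_val_succ {N : ℕ} (i : ℕ) (f : ℕ → ℂ) :
    (∑ b : Fin N, if i = b.val + 1 then f b.val else 0)
      = if 1 ≤ i ∧ i - 1 < N then f (i-1) else 0 := by
  rcases i with _ | i'
  · rw [Finset.sum_eq_zero (fun b _ => if_neg (by omega)), if_neg (by omega)]
  · have hcond : ∀ b : Fin N, (i' + 1 = b.val + 1) = (i' = b.val) := by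
      intro b; apply propext; omega
    simp only [hcond]
    rw [fin_sum_ite_val i' f]
    have h2 : (i' < N) ↔ (1 ≤ i' + 1 ∧ i' + 1 - 1 < N) := by omega
    have hval : f i' = f (i' + 1 - 1) := by rw [Nat.add_sub_cancel]
    rw [if_congr h2 hval rfl]

end Helpers

section HookConstruction

lemma exists_hook (N : ℕ) (hN : 1 ≤ N) : TriLMEExists 2 N (N+1) := by
  set d : ℝ := ((N:ℝ) * ((N:ℝ)+1))⁻¹ with hd
  have hNpos : (0:ℝ) < N := by exact_mod_cast (by omega : 0 < N)
  have hdpos : 0 < d := by rw [hd]; positivity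
  set u : Fin 2 → Fin N → Fin (N+1) := fun a b => if a = 0 then b.castSucc else b.succ with hu
  set w : Fin 2 → Fin N → ℝ := fun a b =>
    if a = 0 then Real.sqrt (((N:ℝ) - b.val) * d) else Real.sqrt (((b.val:ℝ)+1) * d) with hw
  have hu0 : ∀ b, u 0 b = b.castSucc := by
    intro b
    show (if (0 : Fin 2) = 0 then b.castSucc else b.succ) = b.castSucc
    rw [if_pos rfl]
  have hu1 : ∀ b, u 1 b = b.succ := by
    intro b
    show (if (1 : Fin 2) = 0 then b.castSucc else b.succ) = b.succ
    rw [if_neg (by decide : ¬(1:Fin 2) = 0)]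
  have hw0 : ∀ b, w 0 b = Real.sqrt (((N:ℝ) - b.val) * d) := by
    intro b
    show (if (0 : Fin 2) = 0 then Real.sqrt (((N:ℝ) - b.val) * d)
      else Real.sqrt (((b.val:ℝ)+1) * d)) = _
    rw [if_pos rfl]
  have hw1 : ∀ b, w 1 b = Real.sqrt (((b.val:ℝ)+1) * d) := by
    intro b
    show (if (1 : Fin 2) = 0 then Real.sqrt (((N:ℝ) - b.val) * d)
      else Real.sqrt (((b.val:ℝ)+1) * d)) = _
    rw [if_neg (by decide : ¬(1:Fin 2) = 0)]
  have hvalle : ∀ b : Fin N, ((b.val:ℝ)) ≤ (N:ℝ) - 1 := by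
    intro b
    have := b.isLt
    have h2 : (b.val:ℝ) ≤ (N:ℝ) - 1 := by
      have h3 : ((b.val:ℕ):ℝ) ≤ ((N-1:ℕ):ℝ) := by exact_mod_cast (by omega : b.val ≤ N - 1)
      have h4 : ((N-1:ℕ):ℝ) = (N:ℝ) - 1 := by
        rw [Nat.cast_sub (by omega)]; norm_num
      linarith [h3, h4.le, h4.ge]
    exact h2
  have wsq0 : ∀ b, (w 0 b)^2 = ((N:ℝ) - b.val) * d := by
    intro b
    rw [hw0, Real.sq_sqrt]
    apply mul_nonneg _ (le_of_lt hdpos)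
    have := hvalle b
    linarith
  have wsq1 : ∀ b, (w 1 b)^2 = ((b.val:ℝ)+1) * d := by
    intro b
    rw [hw1, Real.sq_sqrt]
    positivity
  have hNd : (N:ℝ) * d = ((N:ℝ)+1)⁻¹ := by
    rw [hd]
    field_simp
  have hN1d : ((N:ℝ)+1) * d = (N:ℝ)⁻¹ := by
    rw [hd]
    field_simp
  have htot : (N:ℝ) * (((N:ℝ)+1) * d) = 1 := by
    rw [hd]
    field_simp
  -- the two diagonal sums agree
  have hS : (∑ b : Fin N, (w 0 b)^2) = ∑ b : Fin N, (w 1 b)^2 := by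
    rw [Finset.sum_congr rfl (fun b _ => wsq0 b), Finset.sum_congr rfl (fun b _ => wsq1 b)]
    rw [Fin.sum_univ_eq_sum_range (fun j => ((N:ℝ) - j) * d),
      Fin.sum_univ_eq_sum_range (fun j => ((j:ℝ)+1) * d)]
    rw [← Finset.sum_range_reflect (fun j => ((j:ℝ)+1) * d) N]
    apply Finset.sum_congr rfl
    intro j hj
    have hj' : j < N := Finset.mem_range.1 hj
    have e1 : ((N - 1 - j : ℕ):ℝ) + 1 = ((N - j : ℕ):ℝ) := by
      exact_mod_cast (by omega : (N-1-j) + 1 = N - j)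
    have e2 : ((N - j : ℕ):ℝ) = (N:ℝ) - j := by
      rw [Nat.cast_sub (le_of_lt hj')]
    rw [e1, e2]
  have hterm : ∀ b : Fin N, (w 0 b)^2 + (w 1 b)^2 = ((N:ℝ)+1) * d := by
    intro b
    rw [wsq0 b, wsq1 b]
    ring
  have hStot : (∑ b : Fin N, (w 0 b)^2) + (∑ b : Fin N, (w 1 b)^2) = 1 := by
    rw [← Finset.sum_add_distrib, Finset.sum_congr rfl (fun b _ => hterm b),
      Finset.sum_const, Finset.card_univ, Fintype.card_fin, nsmul_eq_mul]
    exact htot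
  have hShalf : (∑ b : Fin N, (w 0 b)^2) = 1/2 := by linarith [hS, hStot]
  have hShalf1 : (∑ b : Fin N, (w 1 b)^2) = 1/2 := by linarith [hS, hStot]
  have hfin2 : ∀ i : Fin 2, i = 0 ∨ i = 1 := by decide
  have hinj : ∀ (a : Fin 2) (b b' : Fin N), u a b = u a b' → b = b' := by
    intro a b b' hh
    rcases hfin2 a with rfl | rfl
    · rw [hu0, hu0] at hh; exact Fin.castSucc_injective _ hh
    · rw [hu1, hu1] at hh; exact Fin.succ_injective _ hh
  refine ⟨ψind u w, ?_, ?_, ?_, ?_⟩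
  · rw [TriNormalized, norm_ind, Fin.sum_univ_two]
    exact hStot
  · ext a a'
    rw [rho1_ind]
    have hne01 : ∀ b : Fin N, u 0 b ≠ u 1 b := by
      intro b
      rw [hu0, hu1]
      exact ne_of_lt (Fin.castSucc_lt_succ (i := b))
    rcases hfin2 a with rfl | rfl <;> rcases hfin2 a' with rfl | rfl
    · have ht0 : ∀ b : Fin N, (if u 0 b = u 0 b then ((w 0 b * w 0 b : ℝ):ℂ) else 0)
          = (((w 0 b)^2 : ℝ):ℂ) := by
        intro b
        rw [if_pos rfl, sq]
      rw [Finset.sum_congr rfl (fun b _ => ht0 b), ← Complex.ofReal_sum, hShalf]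
      norm_num [Matrix.one_apply, Matrix.smul_apply]
    · rw [Finset.sum_congr rfl (fun b _ => if_neg (hne01 b))]
      simp [Matrix.one_apply]
    · rw [Finset.sum_congr rfl (fun b _ => if_neg (fun hh => hne01 b hh.symm))]
      simp [Matrix.one_apply]
    · have ht1 : ∀ b : Fin N, (if u 1 b = u 1 b then ((w 1 b * w 1 b : ℝ):ℂ) else 0)
          = (((w 1 b)^2 : ℝ):ℂ) := by
        intro b
        rw [if_pos rfl, sq]
      rw [Finset.sum_congr rfl (fun b _ => ht1 b), ← Complex.ofReal_sum, hShalf1]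
      norm_num [Matrix.one_apply, Matrix.smul_apply]
  · ext b b'
    rw [rho2_ind]
    rcases eq_or_ne b b' with rfl | h
    · rw [Fin.sum_univ_two, if_pos rfl, if_pos rfl]
      have hv : ((w 0 b * w 0 b : ℝ):ℂ) + ((w 1 b * w 1 b : ℝ):ℂ)
          = ((((N:ℝ))⁻¹ : ℝ):ℂ) := by
        rw [← Complex.ofReal_add]
        congr 1
        rw [← sq, ← sq, ← hN1d]
        exact hterm b
      rw [hv, Matrix.smul_apply, Matrix.one_apply_eq, smul_eq_mul, mul_one, one_div]
      push_cast
      ring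
    · rw [Finset.sum_congr rfl (fun a _ => if_neg (fun hh => h (hinj a b b' hh)))]
      simp [Matrix.one_apply, h]
  · ext c c'
    rw [rho3_ind, Fin.sum_univ_two]
    rcases eq_or_ne c c' with rfl | h
    · simp only [and_self]
      have hcond0 : ∀ b : Fin N, (c = u 0 b) = (c.val = b.val) := by
        intro b
        rw [hu0]
        apply propext
        rw [Fin.ext_iff]
        simp
      have hcond1 : ∀ b : Fin N, (c = u 1 b) = (c.val = b.val + 1) := by
        intro b
        rw [hu1]
        apply propext
        rw [Fin.ext_iff]
        simp
      set f0 : ℕ → ℂ := fun j => ((((N:ℝ) - (j:ℝ)) * d : ℝ):ℂ) with hf0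
      set f1 : ℕ → ℂ := fun j => ((((j:ℝ) + 1) * d : ℝ):ℂ) with hf1
      have ht0 : ∀ b : Fin N, (if c = u 0 b then (((w 0 b)^2 : ℝ):ℂ) else 0)
          = (if c.val = b.val then f0 b.val else 0) := by
        intro b
        rw [wsq0 b]
        exact if_congr (iff_of_eq (hcond0 b)) rfl rfl
      have ht1 : ∀ b : Fin N, (if c = u 1 b then (((w 1 b)^2 : ℝ):ℂ) else 0)
          = (if c.val = b.val + 1 then f1 b.val else 0) := by
        intro b
        rw [wsq1 b]
        exact if_congr (iff_of_eq (hcond1 b)) rfl rfl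
      rw [Finset.sum_congr rfl (fun b _ => ht0 b), Finset.sum_congr rfl (fun b _ => ht1 b)]
      rw [fin_sum_ite_val c.val f0, fin_sum_ite_val_succ c.val f1]
      rw [Matrix.smul_apply, Matrix.one_apply_eq, smul_eq_mul, mul_one]
      have hRHS : (1 / (((N:ℕ)+1:ℕ):ℂ)) = (((N:ℝ) * d : ℝ):ℂ) := by
        rw [hNd]
        push_cast
        rw [one_div]
      have hiN : c.val < N + 1 := c.isLt
      by_cases h0 : c.val = 0
      · rw [if_pos (by omega), if_neg (by omega), add_zero, h0, hRHS]
        have key : ((N:ℝ) - ((0:ℕ):ℝ)) * d = (N:ℝ) * d := by norm_num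
        exact congrArg Complex.ofReal key
      · by_cases hNv : c.val = N
        · rw [if_neg (by omega), if_pos (by omega), zero_add, hNv, hRHS]
          have e1 : ((N - 1 : ℕ):ℝ) + 1 = (N:ℝ) := by
            exact_mod_cast (by omega : (N - 1) + 1 = N)
          have key : (((N - 1 : ℕ):ℝ) + 1) * d = (N:ℝ) * d := by rw [e1]
          exact congrArg Complex.ofReal key
        · rw [if_pos (by omega), if_pos (by omega), hRHS, ← Complex.ofReal_add]
          have e1 : ((c.val - 1 : ℕ):ℝ) + 1 = (c.val:ℝ) := by
            exact_mod_cast (by omega : (c.val - 1) + 1 = c.val)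
          have key : ((N:ℝ) - (c.val:ℝ)) * d + (((c.val - 1 : ℕ):ℝ) + 1) * d
              = (N:ℝ) * d := by
            rw [e1]
            ring
          exact congrArg Complex.ofReal key
    · have z0 : (∑ b : Fin N, if c = u 0 b ∧ c' = u 0 b then (((w 0 b)^2:ℝ):ℂ) else 0) = 0 :=
        Finset.sum_eq_zero (fun b _ => if_neg (fun hh => h (hh.1.trans hh.2.symm)))
      have z1 : (∑ b : Fin N, if c = u 1 b ∧ c' = u 1 b then (((w 1 b)^2:ℝ):ℂ) else 0) = 0 :=
        Finset.sum_eq_zero (fun b _ => if_neg (fun hh => h (hh.1.trans hh.2.symm)))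
      rw [z0, z1, add_zero]
      simp [Matrix.one_apply, h]

end HookConstruction

end Constructions

section TensorMachinery

lemma norm_eq_trace {A B C : ℕ} (ψ : Fin A × Fin B × Fin C → ℂ) :
    ((∑ x, ‖ψ x‖^2 : ℝ) : ℂ) = ∑ a, rho1 ψ a a := by
  push_cast
  rw [Fintype.sum_prod_type]
  apply Finset.sum_congr rfl
  intro a _
  rw [rho1, Matrix.of_apply, Fintype.sum_prod_type]
  apply Finset.sum_congr rfl
  intro b _
  apply Finset.sum_congr rfl
  intro c _
  rw [Complex.mul_conj']

lemma inner2 {k : ℕ} {α : Type*} [Fintype α] (g h : α → ℂ) (s1 s2 : Fin k) :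
    (∑ q : α × Fin k, (if s1 = q.2 then g q.1 else 0) * conj (if s2 = q.2 then h q.1 else 0))
      = if s1 = s2 then ∑ c, g c * conj (h c) else 0 := by
  rw [Fintype.sum_prod_type]
  have hterm : ∀ (c : α) (t : Fin k), (if s1 = t then g c else 0) * conj (if s2 = t then h c else 0)
      = if s1 = t ∧ s2 = t then g c * conj (h c) else 0 := by
    intro c t
    rcases em (s1 = t) with h1|h1 <;> rcases em (s2 = t) with h2|h2 <;> simp [h1, h2]
  have hpair : ∀ c : α, (∑ t : Fin k, if s1 = t ∧ s2 = t then g c * conj (h c) else 0)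
      = if s1 = s2 then g c * conj (h c) else 0 := by
    intro c
    rcases eq_or_ne s1 s2 with rfl | hss
    · have hc : ∀ t : Fin k, (if s1 = t ∧ s1 = t then g c * conj (h c) else 0)
          = if s1 = t then g c * conj (h c) else 0 := fun t => by simp
      rw [Finset.sum_congr rfl (fun t _ => hc t), if_pos rfl]
      simp
    · rw [if_neg hss]
      apply Finset.sum_eq_zero
      intro t _
      rw [if_neg]
      rintro ⟨rfl, rfl⟩
      exact hss rfl
  rw [Finset.sum_congr rfl (fun c _ => by
    rw [Finset.sum_congr rfl (fun t _ => hterm c t), hpair c])]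
  rcases eq_or_ne s1 s2 with rfl | hss
  · simp
  · simp [hss]

lemma inner2' {k : ℕ} {α : Type*} [Fintype α] (g h : α → ℂ) (s1 s2 : Fin k) :
    (∑ q : α × Fin k, (if q.2 = s1 then g q.1 else 0) * conj (if q.2 = s2 then h q.1 else 0))
      = if s1 = s2 then ∑ c, g c * conj (h c) else 0 := by
  have hc : ∀ q : α × Fin k, ((if q.2 = s1 then g q.1 else 0) * conj (if q.2 = s2 then h q.1 else 0))
      = ((if s1 = q.2 then g q.1 else 0) * conj (if s2 = q.2 then h q.1 else 0)) := by
    intro q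
    have e1 : (q.2 = s1) = (s1 = q.2) := propext eq_comm
    have e2 : (q.2 = s2) = (s2 = q.2) := propext eq_comm
    simp only [e1, e2]
  rw [Finset.sum_congr rfl (fun q _ => hc q)]
  exact inner2 g h s1 s2

lemma tensor_lemma (B C k : ℕ) (hk : 1 ≤ k) (h : TriLMEExists 2 B C) :
    TriLMEExists 2 (B*k) (C*k) := by
  obtain ⟨ψ, hnorm, h1, h2, h3⟩ := h
  set E : Fin B × Fin k ≃ Fin (B*k) := finProdFinEquiv with hE
  set F : Fin C × Fin k ≃ Fin (C*k) := finProdFinEquiv with hF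
  have hkR : (0:ℝ) < k := by exact_mod_cast (by omega : 0 < k)
  have hk0 : ((k:ℂ)) ≠ 0 := by exact_mod_cast (by omega : k ≠ 0)
  set sk : ℂ := (((Real.sqrt k)⁻¹ : ℝ) : ℂ) with hsk
  have hconj : conj sk = sk := Complex.conj_ofReal _
  have hsks : sk * sk = ((k:ℂ))⁻¹ := by
    rw [hsk, ← Complex.ofReal_mul, ← mul_inv, Real.mul_self_sqrt (le_of_lt hkR)]
    simp
  set ψ' : Fin 2 × Fin (B*k) × Fin (C*k) → ℂ := fun x =>
    (if (E.symm x.2.1).2 = (F.symm x.2.2).2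
      then ψ (x.1, (E.symm x.2.1).1, (F.symm x.2.2).1) else 0) * sk with hψ'
  have happF : ∀ (a : Fin 2) (b' : Fin (B*k)) (q : Fin C × Fin k),
      ψ' (a, b', F q) = (if (E.symm b').2 = q.2 then ψ (a, (E.symm b').1, q.1) else 0) * sk := by
    intro a b' q
    show (if (E.symm b').2 = (F.symm (F q)).2
      then ψ (a, (E.symm b').1, (F.symm (F q)).1) else 0) * sk = _
    rw [Equiv.symm_apply_apply]
  have happE : ∀ (a : Fin 2) (p : Fin B × Fin k) (c' : Fin (C*k)),
      ψ' (a, E p, c') = (if p.2 = (F.symm c').2 then ψ (a, p.1, (F.symm c').1) else 0) * sk := by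
    intro a p c'
    show (if (E.symm (E p)).2 = (F.symm c').2
      then ψ (a, (E.symm (E p)).1, (F.symm c').1) else 0) * sk = _
    rw [Equiv.symm_apply_apply]
  have hprod : ∀ (P Q : Prop) [Decidable P] [Decidable Q] (z z' : ℂ),
      ((if P then z else 0) * sk) * conj ((if Q then z' else 0) * sk)
        = ((if P then z else 0) * conj (if Q then z' else 0)) * ((k:ℂ))⁻¹ := by
    intro P Q _ _ z z'
    rw [map_mul, hconj]
    calc ((if P then z else 0) * sk) * ((conj (if Q then z' else 0)) * sk)
        = ((if P then z else 0) * conj (if Q then z' else 0)) * (sk * sk) := by ring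
      _ = _ := by rw [hsks]
  have hinnerC : ∀ (a a2 : Fin 2) (b1 b2 : Fin (B*k)),
      (∑ c', ψ' (a, b1, c') * conj (ψ' (a2, b2, c')))
        = (if (E.symm b1).2 = (E.symm b2).2
            then ∑ c, ψ (a, (E.symm b1).1, c) * conj (ψ (a2, (E.symm b2).1, c)) else 0)
          * ((k:ℂ))⁻¹ := by
    intro a a2 b1 b2
    rw [← Equiv.sum_comp F (fun c' => ψ' (a, b1, c') * conj (ψ' (a2, b2, c')))]
    have hterm : ∀ q : Fin C × Fin k, ψ' (a, b1, F q) * conj (ψ' (a2, b2, F q))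
        = ((if (E.symm b1).2 = q.2 then ψ (a, (E.symm b1).1, q.1) else 0)
           * conj (if (E.symm b2).2 = q.2 then ψ (a2, (E.symm b2).1, q.1) else 0)) * (k:ℂ)⁻¹ := by
      intro q
      rw [happF, happF, hprod]
    rw [Finset.sum_congr rfl (fun q _ => hterm q), ← Finset.sum_mul,
      inner2 (fun c => ψ (a, (E.symm b1).1, c)) (fun c => ψ (a2, (E.symm b2).1, c)) _ _]
  have hinnerB : ∀ (a : Fin 2) (c1 c2 : Fin (C*k)),
      (∑ b', ψ' (a, b', c1) * conj (ψ' (a, b', c2)))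
        = (if (F.symm c1).2 = (F.symm c2).2
            then ∑ b, ψ (a, b, (F.symm c1).1) * conj (ψ (a, b, (F.symm c2).1)) else 0)
          * ((k:ℂ))⁻¹ := by
    intro a c1 c2
    rw [← Equiv.sum_comp E (fun b' => ψ' (a, b', c1) * conj (ψ' (a, b', c2)))]
    have hterm : ∀ p : Fin B × Fin k, ψ' (a, E p, c1) * conj (ψ' (a, E p, c2))
        = ((if p.2 = (F.symm c1).2 then ψ (a, p.1, (F.symm c1).1) else 0)
           * conj (if p.2 = (F.symm c2).2 then ψ (a, p.1, (F.symm c2).1) else 0)) * (k:ℂ)⁻¹ := by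
      intro p
      rw [happE, happE, hprod]
    rw [Finset.sum_congr rfl (fun p _ => hterm p), ← Finset.sum_mul,
      inner2' (fun b => ψ (a, b, (F.symm c1).1)) (fun b => ψ (a, b, (F.symm c2).1)) _ _]
  have hrho1 : rho1 ψ' = rho1 ψ := by
    ext a a'
    rw [rho1, rho1, Matrix.of_apply, Matrix.of_apply]
    rw [← Equiv.sum_comp E (fun b' => ∑ c', ψ' (a, b', c') * conj (ψ' (a', b', c')))]
    have hstep : ∀ p : Fin B × Fin k, (∑ c', ψ' (a, E p, c') * conj (ψ' (a', E p, c')))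
        = (∑ c, ψ (a, p.1, c) * conj (ψ (a', p.1, c))) * (k:ℂ)⁻¹ := by
      intro p
      rw [hinnerC a a' (E p) (E p), Equiv.symm_apply_apply, if_pos rfl]
    rw [Finset.sum_congr rfl (fun p _ => hstep p), Fintype.sum_prod_type]
    apply Finset.sum_congr rfl
    intro b _
    have hbeta : ∀ y : Fin k, (∑ c, ψ (a, (b, y).1, c) * conj (ψ (a', (b, y).1, c))) * (k:ℂ)⁻¹
        = (∑ c, ψ (a, b, c) * conj (ψ (a', b, c))) * (k:ℂ)⁻¹ := fun y => rfl
    rw [Finset.sum_congr rfl (fun y _ => hbeta y), Finset.sum_const, Finset.card_univ,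
      Fintype.card_fin, nsmul_eq_mul]
    field_simp
  have hnorm' : TriNormalized ψ' := by
    have t1 := norm_eq_trace ψ'
    have t2 := norm_eq_trace ψ
    rw [TriNormalized] at hnorm ⊢
    have heq : ((∑ x, ‖ψ' x‖^2 : ℝ):ℂ) = ((∑ x, ‖ψ x‖^2 : ℝ):ℂ) := by
      rw [t1, t2, hrho1]
    have := Complex.ofReal_injective heq
    rw [this, hnorm]
  refine ⟨ψ', hnorm', ?_, ?_, ?_⟩
  · rw [hrho1]
    exact h1
  · ext b1 b2
    rw [rho2, Matrix.of_apply]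
    rw [Finset.sum_congr rfl (fun a _ => hinnerC a a b1 b2)]
    rw [← Finset.sum_mul]
    by_cases hss : (E.symm b1).2 = (E.symm b2).2
    · simp only [if_pos hss]
      have hid : (∑ a, ∑ c, ψ (a, (E.symm b1).1, c) * conj (ψ (a, (E.symm b2).1, c)))
          = rho2 ψ (E.symm b1).1 (E.symm b2).1 := rfl
      rw [hid, h2]
      rw [Matrix.smul_apply, Matrix.smul_apply, Matrix.one_apply, Matrix.one_apply]
      have hbb : (b1 = b2) = ((E.symm b1).1 = (E.symm b2).1) := by
        apply propext
        constructor
        · intro hh; rw [hh]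
        · intro hh
          have hpe : E.symm b1 = E.symm b2 := Prod.ext hh hss
          exact E.symm.injective hpe
      by_cases hbeq : b1 = b2
      · rw [if_pos hbeq, if_pos (by rw [← hbb]; exact hbeq)]
        simp only [smul_eq_mul, mul_one]
        push_cast
        rw [one_div, one_div, ← mul_inv]
      · rw [if_neg hbeq, if_neg (by rw [← hbb]; exact hbeq)]
        simp
    · simp only [if_neg hss]
      have hbne : b1 ≠ b2 := fun hh => hss (by rw [hh])
      simp [Matrix.one_apply, hbne]
  · ext c1 c2
    rw [rho3, Matrix.of_apply]
    have hsw : ∀ a : Fin 2, (∑ b', ψ' (a, b', c1) * conj (ψ' (a, b', c2)))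
        = (if (F.symm c1).2 = (F.symm c2).2
            then ∑ b, ψ (a, b, (F.symm c1).1) * conj (ψ (a, b, (F.symm c2).1)) else 0)
          * ((k:ℂ))⁻¹ := fun a => hinnerB a c1 c2
    rw [Finset.sum_congr rfl (fun a _ => hsw a)]
    rw [← Finset.sum_mul]
    by_cases hss : (F.symm c1).2 = (F.symm c2).2
    · simp only [if_pos hss]
      have hid : (∑ a, ∑ b, ψ (a, b, (F.symm c1).1) * conj (ψ (a, b, (F.symm c2).1)))
          = rho3 ψ (F.symm c1).1 (F.symm c2).1 := rfl
      rw [hid, h3]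
      rw [Matrix.smul_apply, Matrix.smul_apply, Matrix.one_apply, Matrix.one_apply]
      have hbb : (c1 = c2) = ((F.symm c1).1 = (F.symm c2).1) := by
        apply propext
        constructor
        · intro hh; rw [hh]
        · intro hh
          have hpe : F.symm c1 = F.symm c2 := Prod.ext hh hss
          exact F.symm.injective hpe
      by_cases hbeq : c1 = c2
      · rw [if_pos hbeq, if_pos (by rw [← hbb]; exact hbeq)]
        simp only [smul_eq_mul, mul_one]
        push_cast
        rw [one_div, one_div, ← mul_inv]
      · rw [if_neg hbeq, if_neg (by rw [← hbb]; exact hbeq)]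
        simp
    · simp only [if_neg hss]
      have hbne : c1 ≠ c2 := fun hh => hss (by rw [hh])
      simp [Matrix.one_apply, hbne]

end TensorMachinery

/-- existence of tripartite LME states for dimensions (2, B, C). -/
theorem tripartite_2BC_exists_iff (B C : ℕ) (hB : 2 ≤ B) (hBC : B ≤ C) :
    TriLMEExists 2 B C ↔
      B = C ∨ ∃ N k : ℕ, 1 ≤ N ∧ 1 ≤ k ∧ 2 ≤ N * k ∧
        B = N * k ∧ C = (N + 1) * k := by
  constructor
  · intro h
    rcases eq_or_lt_of_le hBC with heq | hlt
    · exact Or.inl heq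
    · exact Or.inr (forward_dir B C hB hlt h)
  · rintro (heq | ⟨N, k, hN, hk, hNk, hBe, hCe⟩)
    · exact heq ▸ exists_BB B hB
    · rw [hBe, hCe]
      exact tensor_lemma N (N+1) k hk (exists_hook N hN)
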